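/- Let k be a real number with k² = 1/3, let I ⊆ ℝ be an interval, and let (θ, α): I → ℝ² be a C¹ solution of the system dθ/ds = kα(kθ − 1) + θ((θ + k)² − (1 + k²)), dα/ds = α((θ + k)² + (1 − k²)(1 − α)). If α(s₀) < 0 for some s₀ ∈ I, then α(s) < 0 for all s ∈ I, and α'(s) < 0 for all s ∈ I (so α is strictly decreasing on I). -/

import Mathlib

theorem alpha_neg_aux (k : ℝ)
    (I : Set ℝ) (hI : I.OrdConnected) (θ α : ℝ → ℝ)
    (hα : ∀ s ∈ I, HasDerivAt α
      (α s * ((θ s + k) ^ 2 + (1 - k ^ 2) * (1 - α s))) s)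
    (hθc : ∀ s ∈ I, ContinuousAt θ s)
    (s₀ : ℝ) (hs₀ : s₀ ∈ I) (hneg : α s₀ < 0) :
    ∀ s ∈ I, α s < 0 := by
  intro s hs
  set f : ℝ → ℝ := fun t => (θ t + k) ^ 2 + (1 - k ^ 2) * (1 - α t) with hf_def
  have hfc : ∀ t ∈ I, ContinuousAt f t := by
    intro t ht
    exact (((hθc t ht).add continuousAt_const).pow 2).add
      (continuousAt_const.mul (continuousAt_const.sub (hα t ht).continuousAt))
  set a : ℝ := min s₀ s with ha_def
  set b : ℝ := max s₀ s with hb_def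
  have hab : a ≤ b := min_le_max
  have hsub : Set.Icc a b ⊆ I := by
    have := hI.uIcc_subset hs₀ hs
    simpa [Set.uIcc, ha_def, hb_def] using this
  set g : ℝ → ℝ := fun t => f (Set.projIcc a b hab t : ℝ) with hg_def
  have hfcOn : ContinuousOn f (Set.Icc a b) :=
    fun t ht => (hfc t (hsub ht)).continuousWithinAt
  have hg : Continuous g := by
    apply hfcOn.comp_continuous (continuous_subtype_val.comp (continuous_projIcc))
    intro t; exact (Set.projIcc a b hab t).2
  have hg_eq : ∀ t ∈ Set.Icc a b, g t = f t := by
    intro t ht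
    simp [hg_def, Set.projIcc_of_mem hab ht]
  set F : ℝ → ℝ := fun t => ∫ x in a..t, g x with hF_def
  have hF : ∀ t, HasDerivAt F (g t) t := by
    intro t
    exact intervalIntegral.integral_hasDerivAt_right (hg.intervalIntegrable a t)
      (hg.stronglyMeasurableAtFilter _ _) hg.continuousAt
  set h : ℝ → ℝ := fun t => α t * Real.exp (-F t) with hh_def
  have hh' : ∀ t ∈ Set.Icc a b, HasDerivAt h 0 t := by
    intro t ht
    have htI : t ∈ I := hsub ht
    have hexp : HasDerivAt (fun u => Real.exp (-F u))
        (Real.exp (-F t) * (-(g t))) t := ((hF t).neg).exp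
    have := (hα t htI).mul hexp
    refine this.congr_deriv ?_
    rw [hg_eq t ht]
    simp only [hf_def]
    ring
  have hcont : ContinuousOn h (Set.Icc a b) := by
    intro t ht
    exact ((hα t (hsub ht)).continuousAt.mul
      (((hF t).neg).exp.continuousAt)).continuousWithinAt
  have hconst : ∀ x ∈ Set.Icc a b, h x = h a := by
    apply constant_of_has_deriv_right_zero hcont
    intro x hx
    exact (hh' x (Set.mem_Icc_of_Ico hx)).hasDerivWithinAt
  have h1 : h s = h a := hconst s ⟨min_le_right _ _, le_max_right _ _⟩
  have h2 : h s₀ = h a := hconst s₀ ⟨min_le_left _ _, le_max_left _ _⟩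
  have hkey : α s * Real.exp (-F s) = α s₀ * Real.exp (-F s₀) := by
    rw [show α s * Real.exp (-F s) = h s from rfl,
      show α s₀ * Real.exp (-F s₀) = h s₀ from rfl, h1, h2]
  have hE : (0:ℝ) < Real.exp (-F s) := Real.exp_pos _
  have hneg' : α s * Real.exp (-F s) < 0 := by
    rw [hkey]
    exact mul_neg_of_neg_of_pos hneg (Real.exp_pos _)
  nlinarith

/-- For `k² = 1/3`, let `(θ, α)` be a C¹ solution on an interval `I` of
`dθ/ds = kα(kθ − 1) + θ((θ + k)² − (1 + k²))`,
`dα/ds = α((θ + k)² + (1 − k²)(1 − α))`.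
If `α(s₀) < 0` for some `s₀ ∈ I`, then `α < 0` on `I` and `α' < 0` on `I`
(so `α` is strictly decreasing on `I`). -/
theorem alpha_negative_and_decreasing (k : ℝ) (hk : k ^ 2 = 1 / 3)
    (I : Set ℝ) (hI : I.OrdConnected) (θ α : ℝ → ℝ)
    (hθ : ∀ s ∈ I, HasDerivAt θ
      (k * α s * (k * θ s - 1) + θ s * ((θ s + k) ^ 2 - (1 + k ^ 2))) s)
    (hα : ∀ s ∈ I, HasDerivAt α
      (α s * ((θ s + k) ^ 2 + (1 - k ^ 2) * (1 - α s))) s)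
    (s₀ : ℝ) (hs₀ : s₀ ∈ I) (hneg : α s₀ < 0) :
    (∀ s ∈ I, α s < 0) ∧
    (∀ s ∈ I, α s * ((θ s + k) ^ 2 + (1 - k ^ 2) * (1 - α s)) < 0) ∧
    StrictAntiOn α I := by
  have hθc : ∀ s ∈ I, ContinuousAt θ s := fun s hs => (hθ s hs).continuousAt
  have hA : ∀ s ∈ I, α s < 0 := alpha_neg_aux k I hI θ α hα hθc s₀ hs₀ hneg
  have hB : ∀ s ∈ I, α s * ((θ s + k) ^ 2 + (1 - k ^ 2) * (1 - α s)) < 0 := by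
    intro s hs
    have h1 := hA s hs
    have h2 : (0:ℝ) < (θ s + k) ^ 2 + (1 - k ^ 2) * (1 - α s) := by
      nlinarith [sq_nonneg (θ s + k)]
    exact mul_neg_of_neg_of_pos h1 h2
  refine ⟨hA, hB, ?_⟩
  apply StrictAntiOn.mono ?_ (le_refl I)
  have hconv : Convex ℝ I := by
    rw [convex_iff_ordConnected]; exact hI
  apply strictAntiOn_of_deriv_neg hconv
  · intro t ht; exact (hα t ht).continuousAt.continuousWithinAt
  · intro x hx
    have hxI : x ∈ I := interior_subset hx
    rw [(hα x hxI).deriv]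
    exact hB x hxI
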